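/- Let k ≥ 3 be odd and let W_k be the wheel graph consisting of a cycle on k vertices together with one additional hub vertex adjacent to all cycle vertices. Then χ⃗*(W_k) = χ⃗_f(W_k) = 3/2, where χ⃗*(W_k) and χ⃗_f(W_k) denote the maxima of the star dichromatic number and the fractional dichromatic number, respectively, over all orientations of W_k. -/

import Mathlib

open Finset

variable {V : Type*}

/-- `v :: l` forms a directed cycle of the digraph with arc relation `E`:
the vertices are pairwise distinct and each one has an arc to the next, cyclically. -/
def IsDicycle (E : V → V → Prop) (v : V) (l : List V) : Prop :=
  (v :: l).Nodup ∧ List.Chain E v (l ++ [v])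

/-- The vertex set `A` induces an acyclic subdigraph of the digraph `E`:
no directed cycle of `E` has all of its vertices in `A`. -/
def AcyclicOn (E : V → V → Prop) (A : Set V) : Prop :=
  ∀ v l, IsDicycle E v l → ¬ (∀ x ∈ v :: l, x ∈ A)

/-- The open arc of length 1 in `ℝ/pℤ` starting at (the image of) `a`. -/
def unitArc (p a : ℝ) : Set (AddCircle p) :=
  (fun x : ℝ => (x : AddCircle p)) '' Set.Ioo a (a + 1)

/-- An acyclic `p`-colouring of the digraph `E` : the preimage of every open arc
of length 1 induces an acyclic subdigraph. -/
def IsAcyclicColouring (E : V → V → Prop) (p : ℝ) (c : V → AddCircle p) : Prop :=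
  ∀ a : ℝ, AcyclicOn E (c ⁻¹' unitArc p a)

/-- The star dichromatic number of a digraph. -/
noncomputable def starDichromatic (E : V → V → Prop) : ℝ :=
  sInf {p : ℝ | 1 ≤ p ∧ ∃ c : V → AddCircle p, IsAcyclicColouring E p c}

/-- A weak circular `p`-colouring in the sense of Bokal et al. -/
def IsWeakCircularColouring (E : V → V → Prop) (p : ℝ) (c : V → AddCircle p) : Prop :=
  (∀ u w, E u w → c u = c w ∨
    ∃ r : ℝ, r ∈ Set.Ico (0 : ℝ) p ∧ (r : AddCircle p) = c w - c u ∧ 1 ≤ r) ∧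
  ∀ t : AddCircle p, AcyclicOn E (c ⁻¹' {t})

/-- The circular dichromatic number of a digraph. -/
noncomputable def circularDichromatic (E : V → V → Prop) : ℝ :=
  sInf {p : ℝ | 1 ≤ p ∧ ∃ c : V → AddCircle p, IsWeakCircularColouring E p c}

/-- The fractional dichromatic number: the optimal value of the covering linear
program over the acyclic vertex subsets. -/
noncomputable def fracDichromatic [Fintype V] [DecidableEq V] (E : V → V → Prop) : ℝ :=
  sInf {r : ℝ | ∃ x : Finset V → ℝ, (∀ A, 0 ≤ x A) ∧
    (∀ A : Finset V, x A ≠ 0 → AcyclicOn E ↑A) ∧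
    (∀ v : V, 1 ≤ ∑ A ∈ Finset.univ.filter (fun A : Finset V => v ∈ A), x A) ∧
    r = ∑ A : Finset V, x A}

/-- The cyclic interval `{i, i+1, ..., i+d-1}` in `ℤ/kℤ`. -/
def cycInterval (k : ℕ) (i : ZMod k) (d : ℕ) : Set (ZMod k) :=
  {j : ZMod k | ∃ t : ℕ, t < d ∧ j = i + (t : ZMod k)}

/-- An acyclic `(k,d)`-colouring of the digraph `E`. -/
def IsAcyclicKDColouring (E : V → V → Prop) (k d : ℕ) (c : V → ZMod k) : Prop :=
  ∀ i : ZMod k, AcyclicOn E (c ⁻¹' cycInterval k i d)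

/-- The dichromatic number: the least `k` such that the vertex set can be partitioned
into `k` classes each inducing an acyclic subdigraph. -/
noncomputable def dichromatic (E : V → V → Prop) : ℕ :=
  sInf {k : ℕ | ∃ c : V → Fin k, ∀ i : Fin k, AcyclicOn E (c ⁻¹' {i})}

/-- `v :: l` forms a cycle of the simple graph `G` (of length at least 3). -/
def IsGraphCycle (G : SimpleGraph V) (v : V) (l : List V) : Prop :=
  3 ≤ (v :: l).length ∧ (v :: l).Nodup ∧ List.Chain G.Adj v (l ++ [v])

/-- The vertex set `A` induces a forest (acyclic subgraph) in the simple graph `G`. -/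
def ForestOn (G : SimpleGraph V) (A : Set V) : Prop :=
  ∀ v l, IsGraphCycle G v l → ¬ (∀ x ∈ v :: l, x ∈ A)

/-- A `(k,d)`-tree-colouring of a graph. -/
def IsTreeColouring (G : SimpleGraph V) (k d : ℕ) (c : V → ZMod k) : Prop :=
  ∀ i : ZMod k, ForestOn G (c ⁻¹' cycInterval k i d)

/-- The circular vertex arboricity of a graph. -/
noncomputable def circularVertexArboricity (G : SimpleGraph V) : ℝ :=
  sInf {r : ℝ | ∃ k d : ℕ, 1 ≤ d ∧ d ≤ k ∧
    (∃ c : V → ZMod k, IsTreeColouring G k d c) ∧ r = (k : ℝ) / d}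

/-- `E` is an orientation of the simple graph `G`: for each edge exactly one of the
two possible arcs is present, and there are no other arcs. -/
def IsOrientation (G : SimpleGraph V) (E : V → V → Prop) : Prop :=
  ∀ u w, ((E u w ∨ E w u) ↔ G.Adj u w) ∧ ¬ (E u w ∧ E w u)

/-- The star dichromatic number of a graph: the maximum over all orientations. -/
noncomputable def starDichromaticGraph (G : SimpleGraph V) : ℝ :=
  sSup {r : ℝ | ∃ E : V → V → Prop, IsOrientation G E ∧ r = starDichromatic E}

/-- The fractional dichromatic number of a graph: the maximum over all orientations. -/
noncomputable def fracDichromaticGraph [Fintype V] [DecidableEq V] (G : SimpleGraph V) : ℝ :=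
  sSup {r : ℝ | ∃ E : V → V → Prop, IsOrientation G E ∧ r = fracDichromatic E}

/-- The fractional chromatic number of a graph: the optimal value of the covering
linear program over the independent vertex subsets. -/
noncomputable def fractionalChromatic [Fintype V] [DecidableEq V] (G : SimpleGraph V) : ℝ :=
  sInf {r : ℝ | ∃ x : Finset V → ℝ, (∀ A, 0 ≤ x A) ∧
    (∀ A : Finset V, x A ≠ 0 → ∀ u ∈ A, ∀ w ∈ A, ¬ G.Adj u w) ∧
    (∀ v : V, 1 ≤ ∑ A ∈ Finset.univ.filter (fun A : Finset V => v ∈ A), x A) ∧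
    r = ∑ A : Finset V, x A}

/-- A `(k,d)`-colouring of a graph in the sense of Vince: colours of adjacent vertices
have circular `k`-distance at least `d`. -/
def IsVinceColouring (G : SimpleGraph V) (k d : ℕ) (c : V → ZMod k) : Prop :=
  ∀ u w, G.Adj u w → d ≤ (c u - c w).val ∧ d ≤ (c w - c u).val

/-- Vince's star (circular) chromatic number of a graph. -/
noncomputable def starChromatic (G : SimpleGraph V) : ℝ :=
  sInf {r : ℝ | ∃ k d : ℕ, 1 ≤ d ∧ d ≤ k ∧
    (∃ c : V → ZMod k, IsVinceColouring G k d c) ∧ r = (k : ℝ) / d}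

/-- The circulant digraph `C⃗(k,d)` on `ℤ/kℤ`: each vertex `i` has the outgoing arcs
`(i, i+d), (i, i+d+1), …, (i, i+k-1)`. -/
def circulantDigraph (k d : ℕ) : ZMod k → ZMod k → Prop :=
  fun i j => ∃ t : ℕ, d ≤ t ∧ t < k ∧ j = i + (t : ZMod k)

/-- The directed cycle `C⃗_n` on `ℤ/nℤ`. -/
def dirCycle (n : ℕ) : ZMod n → ZMod n → Prop :=
  fun i j => j = i + 1

/-- The digraph `D^s` obtained from `D` by adding a dominating source `none`. -/
def addSource (E : V → V → Prop) : Option V → Option V → Prop :=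
  fun a b => match a, b with
  | none, some _ => True
  | some u, some w => E u w
  | _, none => False

/-- The wheel graph `W_k`: a cycle on `ℤ/kℤ` together with a hub `none` adjacent to
every cycle vertex. -/
def wheelGraph (k : ℕ) : SimpleGraph (Option (ZMod k)) :=
  SimpleGraph.fromRel (fun a b => match a, b with
    | none, some _ => True
    | some i, some j => j = i + 1
    | _, none => False)
/-! ### Auxiliary development -/

section Aux

lemma AcyclicOn.mono {E : V → V → Prop} {A B : Set V} (h : AcyclicOn E A) (hBA : B ⊆ A) :
    AcyclicOn E B := fun v l hd hall => h v l hd (fun x hx => hBA (hall x hx))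

/-- A dicycle can be rotated to start at any of its vertices. -/
lemma IsDicycle.rotate {E : V → V → Prop} {v x : V} {l : List V} (h : IsDicycle E v l)
    (hx : x ∈ v :: l) : ∃ l', IsDicycle E x l' ∧ ∀ y, y ∈ x :: l' ↔ y ∈ v :: l := by
  obtain ⟨⟨n, hn⟩, hget⟩ := List.mem_iff_get.mp hx
  have hrot : (v :: l).rotate n = x :: (List.drop (n+1) (v :: l) ++ List.take n (v :: l)) := by
    rw [List.rotate_eq_drop_append_take (le_of_lt hn), List.drop_eq_getElem_cons hn, ← List.get_eq_getElem (i := ⟨n, hn⟩), hget]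
    simp
  refine ⟨List.drop (n+1) (v :: l) ++ List.take n (v :: l), ⟨?_, ?_⟩, ?_⟩
  · rw [← hrot]
    exact ((List.IsRotated.forall (v :: l) n).nodup_iff).mpr h.1
  · have hc : Cycle.Chain E ↑(v :: l) := (Cycle.chain_coe_cons E v l).mpr h.2
    have hco : (↑((v :: l).rotate n) : Cycle V) = ↑(v :: l) :=
      Cycle.coe_eq_coe.mpr (List.IsRotated.forall (v :: l) n)
    have : Cycle.Chain E ↑((v :: l).rotate n) := by rw [hco]; exact hc
    rw [hrot] at this
    exact (Cycle.chain_coe_cons E x _).mp this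
  · intro y
    rw [← hrot]
    exact List.mem_rotate

/-- Extract the underlying list of a list of `Option`s having no `none`. -/
lemma list_all_some {α : Type*} : ∀ (L : List (Option α)), (∀ x ∈ L, x ≠ none) →
    ∃ M : List α, L = M.map some
  | [], _ => ⟨[], rfl⟩
  | (a :: L), h => by
    obtain ⟨M, hM⟩ := list_all_some L (fun x hx => h x (List.mem_cons_of_mem _ hx))
    cases a with
    | none => exact absurd rfl (h none List.mem_cons_self)
    | some b => exact ⟨b :: M, by simp [hM]⟩

lemma chain_append_last {α : Type*} {R : α → α → Prop} :
    ∀ (l : List α) (a b : α), List.Chain R a (l ++ [b]) →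
      List.Chain R a l ∧ R ((a :: l).getLast (List.cons_ne_nil a l)) b
  | [], a, b, h => by
    simp only [List.nil_append, List.Chain, List.chain_cons] at h
    exact ⟨List.Chain.nil, by simpa using h.1⟩
  | (d :: l'), a, b, h => by
    simp only [List.cons_append, List.Chain, List.chain_cons] at h
    obtain ⟨h1, h2⟩ := chain_append_last l' d b h.2
    refine ⟨List.chain_cons.mpr ⟨h.1, h1⟩, ?_⟩
    rwa [List.getLast_cons (List.cons_ne_nil d l')]

end Aux

section WheelFacts

variable {k : ℕ} [NeZero k]

/-- The (rim) triangle at position `i` is a directed triangle. -/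
def Cyc (E : Option (ZMod k) → Option (ZMod k) → Prop) (i : ZMod k) : Prop :=
  (E none (some i) ∧ E (some i) (some (i+1)) ∧ E (some (i+1)) none) ∨
  (E none (some (i+1)) ∧ E (some (i+1)) (some i) ∧ E (some i) none)

variable {E : Option (ZMod k) → Option (ZMod k) → Prop}

lemma orient_noTwo (hE : IsOrientation (wheelGraph k) E) {u w} (h1 : E u w) (h2 : E w u) :
    False := (hE u w).2 ⟨h1, h2⟩

lemma orient_noLoop (hE : IsOrientation (wheelGraph k) E) (u) : ¬ E u u :=
  fun h => orient_noTwo hE h h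

lemma orient_adj (hE : IsOrientation (wheelGraph k) E) {u w} (h : E u w) :
    (wheelGraph k).Adj u w := ((hE u w).1).mp (Or.inl h)

lemma rimStep (hE : IsOrientation (wheelGraph k) E) {i j : ZMod k}
    (h : E (some i) (some j)) : j = i + 1 ∨ i = j + 1 := by
  have := orient_adj hE h
  rw [wheelGraph, SimpleGraph.fromRel_adj] at this
  exact this.2

lemma spokeTot (hE : IsOrientation (wheelGraph k) E) (i : ZMod k) :
    E none (some i) ∨ E (some i) none := by
  have : (wheelGraph k).Adj none (some i) := by
    rw [wheelGraph, SimpleGraph.fromRel_adj]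
    exact ⟨by simp, Or.inl trivial⟩
  exact (hE none (some i)).1.mpr this

end WheelFacts

section Chains

variable {k : ℕ} [NeZero k]
variable {E : Option (ZMod k) → Option (ZMod k) → Prop}

lemma lin_mono (hE : IsOrientation (wheelGraph k) E) :
    ∀ (cs : List (ZMod k)) (c : ZMod k), (c :: cs).Nodup →
      List.Chain (fun x y => E (some x) (some y)) c cs →
      List.Chain (fun x y : ZMod k => y = x + 1) c cs ∨
      List.Chain (fun x y : ZMod k => x = y + 1) c cs
  | [], c, _, _ => Or.inl List.Chain.nil
  | [d], c, _, h => by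
    rcases rimStep hE (List.chain_cons.mp h).1 with h1 | h1
    · exact Or.inl (List.chain_cons.mpr ⟨h1, List.Chain.nil⟩)
    · exact Or.inr (List.chain_cons.mpr ⟨h1, List.Chain.nil⟩)
  | (d :: e :: rest), c, hnd, h => by
    have hstep := (List.chain_cons.mp h).1
    have htail := (List.chain_cons.mp h).2
    have hndt : (d :: e :: rest).Nodup := hnd.of_cons
    rcases lin_mono hE (e :: rest) d hndt htail with ht | ht
    · rcases rimStep hE hstep with h1 | h1
      · exact Or.inl (List.chain_cons.mpr ⟨h1, ht⟩)
      · exfalso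
        have he : e = d + 1 := (List.chain_cons.mp ht).1
        have hce : c = e := h1.trans he.symm
        exact (List.nodup_cons.mp hnd).1 (by rw [hce]; simp)
    · rcases rimStep hE hstep with h1 | h1
      · exfalso
        have he : d = e + 1 := (List.chain_cons.mp ht).1
        have hce : c = e := by
          have h2 : c + 1 = e + 1 := by rw [← h1, he]
          exact add_right_cancel h2
        exact (List.nodup_cons.mp hnd).1 (by rw [hce]; simp)
      · exact Or.inr (List.chain_cons.mpr ⟨h1, ht⟩)

lemma asc_get : ∀ (cs : List (ZMod k)) (c : ZMod k),
    List.Chain (fun x y : ZMod k => y = x + 1) c cs →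
    ∀ (t : ℕ) (ht : t < cs.length), cs.get ⟨t, ht⟩ = c + ((t + 1 : ℕ) : ZMod k)
  | [], _, _, t, ht => absurd ht (by simp)
  | (d :: cs'), c, h, 0, ht => by
    have hd : d = c + 1 := (List.chain_cons.mp h).1
    simpa using hd
  | (d :: cs'), c, h, (t+1), ht => by
    have hd : d = c + 1 := (List.chain_cons.mp h).1
    have ih := asc_get cs' d (List.chain_cons.mp h).2 t (by simpa using ht)
    have : (d :: cs').get ⟨t+1, ht⟩ = cs'.get ⟨t, by simpa using ht⟩ := rfl
    rw [this, ih, hd]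
    push_cast
    ring

lemma desc_get : ∀ (cs : List (ZMod k)) (c : ZMod k),
    List.Chain (fun x y : ZMod k => x = y + 1) c cs →
    ∀ (t : ℕ) (ht : t < cs.length), cs.get ⟨t, ht⟩ = c - ((t + 1 : ℕ) : ZMod k)
  | [], _, _, t, ht => absurd ht (by simp)
  | (d :: cs'), c, h, 0, ht => by
    have hd : c = d + 1 := (List.chain_cons.mp h).1
    have : d = c - 1 := by rw [hd]; ring
    simpa using this
  | (d :: cs'), c, h, (t+1), ht => by
    have hd : c = d + 1 := (List.chain_cons.mp h).1
    have ih := desc_get cs' d (List.chain_cons.mp h).2 t (by simpa using ht)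
    have hh : (d :: cs').get ⟨t+1, ht⟩ = cs'.get ⟨t, by simpa using ht⟩ := rfl
    have hdc : d = c - 1 := by rw [hd]; ring
    rw [hh, ih, hdc]
    push_cast
    ring

lemma rim_dicycle (hk : 3 ≤ k) (hE : IsOrientation (wheelGraph k) E) {v : Option (ZMod k)}
    {l : List (Option (ZMod k))} (hd : IsDicycle E v l)
    (hnone : ∀ x ∈ v :: l, x ≠ none) :
    (∀ j : ZMod k, some j ∈ v :: l) ∧
    ((∀ i, E (some i) (some (i+1))) ∨ (∀ i, E (some (i+1)) (some i))) := by
  obtain ⟨M, hM⟩ := list_all_some (v :: l) hnone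
  cases M with
  | nil => simp at hM
  | cons c cs =>
  simp only [List.map_cons] at hM
  obtain ⟨hv, hl⟩ : v = some c ∧ l = List.map some cs := by
    constructor
    · exact (List.cons_eq_cons.mp hM).1
    · exact (List.cons_eq_cons.mp hM).2
  have hnd : (c :: cs).Nodup := by
    have h1 := hd.1
    rw [hv, hl] at h1
    exact (List.map_cons (f := some) (a := c) (l := cs) ▸ h1 : (List.map some (c :: cs)).Nodup).of_map some
  have hch : List.Chain (fun x y : ZMod k => E (some x) (some y)) c (cs ++ [c]) := by
    have h2 := hd.2
    rw [hv, hl] at h2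
    have : List.Chain E (some c) (List.map some (cs ++ [c])) := by
      simpa [List.map_append] using h2
    exact (List.isChain_map some (l := c :: (cs ++ [c]))).mp this
  obtain ⟨hlin, hwrap⟩ := chain_append_last cs c c hch
  have hmk : cs.length + 1 ≤ k := by
    have := hnd.length_le_card
    simpa [ZMod.card] using this
  have hmem : ∀ j, j ∈ c :: cs → some j ∈ v :: l := by
    intro j hj
    rw [hM]
    exact List.mem_map_of_mem (f := some) hj
  rcases lin_mono hE cs c hnd hlin with hasc | hdesc
  · -- ascending case
    cases cs with
    | nil =>
      exfalso
      have : E (some c) (some c) := by simpa using hwrap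
      exact orient_noLoop hE _ this
    | cons d cs' =>
    set n := (d :: cs').length with hn
    have hn1 : 1 ≤ n := by simp [hn]
    have hlast : ((c :: d :: cs').getLast (List.cons_ne_nil _ _)) = c + ((n : ℕ) : ZMod k) := by
      rw [List.getLast_cons (List.cons_ne_nil d cs'), List.getLast_eq_getElem, ← List.get_eq_getElem (i := ⟨(d :: cs').length - 1, by simp⟩)]
      rw [asc_get (d :: cs') c hasc (n - 1) (by omega)]
      have hnn : n - 1 + 1 = n := by omega
      rw [hnn]
    rw [hlast] at hwrap
    rcases rimStep hE hwrap with hw | hw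
    · -- c = c + n + 1 : full rim, forward
      have hz : ((n + 1 : ℕ) : ZMod k) = 0 := by
        push_cast
        linear_combination -hw
      have hdvd : k ∣ n + 1 := (ZMod.natCast_eq_zero_iff _ _).mp hz
      have hnk : n + 1 = k := Nat.le_antisymm hmk (Nat.le_of_dvd (by omega) hdvd)
      have harc : ∀ t, t < n → E (some (c + ((t:ℕ) : ZMod k))) (some (c + ((t+1 : ℕ) : ZMod k))) := by
        intro t ht
        rcases Nat.eq_zero_or_pos t with rfl | htpos
        · have h0 := (List.chain_cons.mp hlin).1
          have hg : d = c + 1 := (List.chain_cons.mp hasc).1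
          simpa [hg] using h0
        · have hgets : True ∧ ∀ (i : ℕ) (h : i < (d :: cs').length - 1), E (some ((d :: cs').get ⟨i, by omega⟩)) (some ((d :: cs').get ⟨i + 1, by omega⟩)) := ⟨trivial, fun i h => List.isChain_iff_getElem.mp (List.isChain_cons_cons.mp hlin).2 i (by omega)⟩
          have harc' := hgets.2 (t - 1) (by omega)
          have e1 := asc_get (d :: cs') c hasc (t - 1) (by omega)
          have e2 := asc_get (d :: cs') c hasc (t - 1 + 1) (by omega)
          rw [e1, e2] at harc'
          have ht1 : t - 1 + 1 = t := by omega
          rw [ht1] at harc'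
          exact harc'
      have hcov : ∀ j : ZMod k, some j ∈ v :: l := by
        intro j
        apply hmem
        set t := (j - c).val with htdef
        have htk : t < k := ZMod.val_lt _
        have hjc : j = c + ((t : ℕ) : ZMod k) := by
          rw [htdef, ZMod.natCast_rightInverse (j - c)]
          ring
        rcases Nat.eq_zero_or_pos t with ht0 | htpos
        · rw [ht0] at hjc
          simp only [Nat.cast_zero, add_zero] at hjc
          rw [hjc]; simp
        · have hlt : t - 1 < n := by omega
          have := asc_get (d :: cs') c hasc (t - 1) (by omega)
          have ht1 : t - 1 + 1 = t := by omega
          rw [ht1] at this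
          rw [hjc, ← this]
          exact List.mem_cons_of_mem _ (List.get_mem _ _)
      refine ⟨hcov, Or.inl ?_⟩
      intro i
      set t := (i - c).val with htdef
      have htk : t < k := ZMod.val_lt _
      have hic : i = c + ((t : ℕ) : ZMod k) := by
        rw [htdef, ZMod.natCast_rightInverse (i - c)]
        ring
      rcases Nat.lt_or_ge t n with htn | htn
      · have := harc t htn
        rw [hic]
        have hsucc : c + ((t:ℕ) : ZMod k) + 1 = c + ((t+1 : ℕ) : ZMod k) := by push_cast; ring
        rw [hsucc]
        exact this
      · -- t = n : wrap arc
        have htn' : t = n := by omega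
        have hi1 : i + 1 = c := by
          rw [hic, htn']
          have : c + ((n:ℕ) : ZMod k) + 1 = c + ((n+1 : ℕ) : ZMod k) := by push_cast; ring
          rw [this, hz, add_zero]
        have hie : i = c + ((n:ℕ) : ZMod k) := by rw [hic, htn']
        rw [hi1, hie]
        exact hwrap
    · -- c + n = c + 1 : n ≡ 1, so n = 1 and we get a 2-cycle
      exfalso
      have hz : ((n - 1 : ℕ) : ZMod k) = 0 := by
        have hcast : ((n - 1 : ℕ) : ZMod k) = ((n : ℕ) : ZMod k) - 1 := by
          have : ((n - 1) + 1 : ℕ) = n := by omega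
          calc ((n - 1 : ℕ) : ZMod k) = (((n-1) + 1 : ℕ) : ZMod k) - 1 := by push_cast; ring
          _ = ((n : ℕ) : ZMod k) - 1 := by rw [this]
        rw [hcast]
        linear_combination hw
      have hdvd : k ∣ n - 1 := (ZMod.natCast_eq_zero_iff _ _).mp hz
      have hn1' : n = 1 := by
        rcases Nat.eq_zero_of_dvd_of_lt hdvd (by omega) with h
        omega
      -- cs = [d]
      have hcs' : cs' = [] := by
        have : cs'.length = 0 := by
          have : (d :: cs').length = 1 := hn1' ▸ rfl
          simpa using this
        exact List.length_eq_zero_iff.mp this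
      subst hcs'
      have hdc : d = c + 1 := (List.chain_cons.mp hasc).1
      have harc1 : E (some c) (some d) := (List.chain_cons.mp hlin).1
      have harc2 : E (some (c + 1)) (some c) := by
        have : ((1 : ℕ) : ZMod k) = 1 := by push_cast; ring
        simpa [hn1', this] using hwrap
      rw [hdc] at harc1
      exact orient_noTwo hE harc1 harc2
  · -- descending case
    cases cs with
    | nil =>
      exfalso
      have : E (some c) (some c) := by simpa using hwrap
      exact orient_noLoop hE _ this
    | cons d cs' =>
    set n := (d :: cs').length with hn
    have hn1 : 1 ≤ n := by simp [hn]
    have hlast : ((c :: d :: cs').getLast (List.cons_ne_nil _ _)) = c - ((n : ℕ) : ZMod k) := by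
      rw [List.getLast_cons (List.cons_ne_nil d cs'), List.getLast_eq_getElem, ← List.get_eq_getElem (i := ⟨(d :: cs').length - 1, by simp⟩)]
      rw [desc_get (d :: cs') c hdesc (n - 1) (by omega)]
      have hnn : n - 1 + 1 = n := by omega
      rw [hnn]
    rw [hlast] at hwrap
    rcases rimStep hE hwrap with hw | hw
    · -- c = c - n + 1 : n ≡ 1, 2-cycle
      exfalso
      have hz : ((n - 1 : ℕ) : ZMod k) = 0 := by
        have hcast : ((n - 1 : ℕ) : ZMod k) = ((n : ℕ) : ZMod k) - 1 := by
          have : ((n - 1) + 1 : ℕ) = n := by omega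
          calc ((n - 1 : ℕ) : ZMod k) = (((n-1) + 1 : ℕ) : ZMod k) - 1 := by push_cast; ring
          _ = ((n : ℕ) : ZMod k) - 1 := by rw [this]
        rw [hcast]
        linear_combination hw
      have hdvd : k ∣ n - 1 := (ZMod.natCast_eq_zero_iff _ _).mp hz
      have hn1' : n = 1 := by
        rcases Nat.eq_zero_of_dvd_of_lt hdvd (by omega) with h
        omega
      have hcs' : cs' = [] := by
        have : (d :: cs').length = 1 := hn1' ▸ rfl
        exact List.length_eq_zero_iff.mp (by simpa using this)
      subst hcs'
      have hdc : c = d + 1 := (List.chain_cons.mp hdesc).1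
      have harc1 : E (some c) (some d) := (List.chain_cons.mp hlin).1
      have harc2 : E (some (c - 1)) (some c) := by
        have : ((1 : ℕ) : ZMod k) = 1 := by push_cast; ring
        simpa [hn1', this] using hwrap
      have hdc' : d = c - 1 := by rw [hdc]; ring
      rw [hdc'] at harc1
      exact orient_noTwo hE harc1 harc2
    · -- c - n = c + 1 : full rim, backward
      have hz : ((n + 1 : ℕ) : ZMod k) = 0 := by
        push_cast
        linear_combination -hw
      have hdvd : k ∣ n + 1 := (ZMod.natCast_eq_zero_iff _ _).mp hz
      have hnk : n + 1 = k := Nat.le_antisymm hmk (Nat.le_of_dvd (by omega) hdvd)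
      have harc : ∀ t, t < n → E (some (c - ((t:ℕ) : ZMod k))) (some (c - ((t+1 : ℕ) : ZMod k))) := by
        intro t ht
        rcases Nat.eq_zero_or_pos t with rfl | htpos
        · have h0 := (List.chain_cons.mp hlin).1
          have hg : c = d + 1 := (List.chain_cons.mp hdesc).1
          have hg' : d = c - 1 := by rw [hg]; ring
          have e : c - ((0 : ℕ) : ZMod k) = c := by push_cast; ring
          have e1 : c - ((0 + 1 : ℕ) : ZMod k) = c - 1 := by push_cast; ring
          rw [e, e1, ← hg']
          exact h0
        · have hgets : True ∧ ∀ (i : ℕ) (h : i < (d :: cs').length - 1), E (some ((d :: cs').get ⟨i, by omega⟩)) (some ((d :: cs').get ⟨i + 1, by omega⟩)) := ⟨trivial, fun i h => List.isChain_iff_getElem.mp (List.isChain_cons_cons.mp hlin).2 i (by omega)⟩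
          have harc' := hgets.2 (t - 1) (by omega)
          have e1 := desc_get (d :: cs') c hdesc (t - 1) (by omega)
          have e2 := desc_get (d :: cs') c hdesc (t - 1 + 1) (by omega)
          rw [e1, e2] at harc'
          have ht1 : t - 1 + 1 = t := by omega
          rw [ht1] at harc'
          exact harc'
      have hcov : ∀ j : ZMod k, some j ∈ v :: l := by
        intro j
        apply hmem
        set t := (c - j).val with htdef
        have htk : t < k := ZMod.val_lt _
        have hjc : j = c - ((t : ℕ) : ZMod k) := by
          rw [htdef, ZMod.natCast_rightInverse (c - j)]
          ring
        rcases Nat.eq_zero_or_pos t with ht0 | htpos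
        · rw [ht0] at hjc
          simp only [Nat.cast_zero, sub_zero] at hjc
          rw [hjc]; simp
        · have hlt : t - 1 < n := by omega
          have := desc_get (d :: cs') c hdesc (t - 1) (by omega)
          have ht1 : t - 1 + 1 = t := by omega
          rw [ht1] at this
          rw [hjc, ← this]
          exact List.mem_cons_of_mem _ (List.get_mem _ _)
      refine ⟨hcov, Or.inr ?_⟩
      intro i
      set t := (c - 1 - i).val with htdef
      have htk : t < k := ZMod.val_lt _
      have hic : i = c - 1 - ((t : ℕ) : ZMod k) := by
        rw [htdef, ZMod.natCast_rightInverse (c - 1 - i)]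
        ring
      have hi1 : i + 1 = c - ((t : ℕ) : ZMod k) := by rw [hic]; ring
      rcases Nat.lt_or_ge t n with htn | htn
      · have := harc t htn
        have hie : i = c - ((t + 1 : ℕ) : ZMod k) := by rw [hic]; push_cast; ring
        rw [hi1, hie]
        exact this
      · have htn' : t = n := by omega
        -- i = c - 1 - n = (c - n) - 1 = (c+1) - 1 = c
        have hie : i = c := by
          rw [hic, htn']
          have : c - 1 - ((n : ℕ) : ZMod k) = (c - ((n:ℕ):ZMod k)) - 1 := by ring
          rw [this, hw]
          ring
        have hi1' : i + 1 = c - ((n : ℕ) : ZMod k) := by rw [hi1, htn']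
        rw [hi1', hie]
        exact hwrap
      
end Chains

section Hub

variable {k : ℕ} [NeZero k]
variable {E : Option (ZMod k) → Option (ZMod k) → Prop}

lemma hub_dicycle (hk : 3 ≤ k) (hE : IsOrientation (wheelGraph k) E) {v : Option (ZMod k)}
    {l : List (Option (ZMod k))} (hd : IsDicycle E v l) (hnone : none ∈ v :: l) :
    (∃ b c : ZMod k, b ≠ c ∧ some b ∈ v :: l ∧ some (b+1) ∈ v :: l ∧
      some c ∈ v :: l ∧ some (c+1) ∈ v :: l) ∨
    (∃ b : ZMod k, Cyc E b ∧ some b ∈ v :: l ∧ some (b+1) ∈ v :: l) := by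
  obtain ⟨l₁, hd₁, hmem⟩ := hd.rotate hnone
  have hnl₁ : none ∉ l₁ := by
    have := hd₁.1
    exact (List.nodup_cons.mp this).1
  obtain ⟨bs, hbs⟩ := list_all_some l₁ (by
    intro x hx hxn
    exact hnl₁ (hxn ▸ hx))
  have hch : List.Chain E none (l₁ ++ [none]) := hd₁.2
  rw [hbs] at hch
  -- transfer membership to original list via hmem
  have hm : ∀ b : ZMod k, b ∈ bs → some b ∈ v :: l := by
    intro b hb
    rw [← hmem]
    exact List.mem_cons_of_mem _ (hbs ▸ List.mem_map_of_mem (f := some) hb)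
  have hndbs : bs.Nodup := by
    have := (List.nodup_cons.mp hd₁.1).2
    rw [hbs] at this
    exact this.of_map some
  cases bs with
  | nil =>
    exfalso
    simp only [List.map_nil, List.nil_append, List.Chain, List.chain_cons] at hch
    exact orient_noLoop hE _ hch.1
  | cons x bs' =>
  cases bs' with
  | nil =>
    exfalso
    simp only [List.map_cons, List.map_nil, List.cons_append, List.nil_append,
      List.Chain, List.chain_cons] at hch
    exact orient_noTwo hE hch.1 hch.2.1
  | cons y bs'' =>
  cases bs'' with
  | nil =>
    -- triangle: none → x → y → none
    simp only [List.map_cons, List.map_nil, List.cons_append, List.nil_append,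
      List.Chain, List.chain_cons] at hch
    obtain ⟨h1, h2, h3, -⟩ := hch
    right
    rcases rimStep hE h2 with hxy | hxy
    · refine ⟨x, Or.inl ⟨h1, by rw [← hxy]; exact h2, by rw [← hxy]; exact h3⟩,
        hm x (by simp), by rw [← hxy]; exact hm y (by simp)⟩
    · refine ⟨y, Or.inr ⟨by rw [← hxy]; exact h1, by rw [← hxy]; exact h2, h3⟩,
        hm y (by simp), by rw [← hxy]; exact hm x (by simp)⟩
  | cons z bs''' =>
  -- at least three rim vertices: two distinct consecutive pairs
  simp only [List.map_cons, List.cons_append, List.Chain, List.chain_cons] at hch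
  obtain ⟨h1, h2, h3, -⟩ := hch
  have hxy : x ≠ y := by
    intro h
    exact (List.nodup_cons.mp hndbs).1 (by rw [h]; simp)
  have hyz : y ≠ z := by
    intro h
    exact (List.nodup_cons.mp (List.nodup_cons.mp hndbs).2).1 (by rw [h]; simp)
  have hxz : x ≠ z := by
    intro h
    exact (List.nodup_cons.mp hndbs).1 (by rw [h]; simp)
  left
  rcases rimStep hE h2 with h12 | h12 <;> rcases rimStep hE h3 with h23 | h23
  · -- y = x+1, z = y+1 : ascending
    exact ⟨x, y, hxy, hm x (by simp), by rw [← h12]; exact hm y (by simp),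
      hm y (by simp), by rw [← h23]; exact hm z (by simp)⟩
  · -- y = x+1, y = z+1 : z = x, contradiction
    exact absurd (add_right_cancel (h12.symm.trans h23)) hxz
  · -- x = y+1, z = y+1 : x = z, contradiction
    exact absurd (h12.trans h23.symm) hxz
  · -- x = y+1, y = z+1 : descending
    exact ⟨y, z, hyz, hm y (by simp), by rw [← h12]; exact hm x (by simp),
      hm z (by simp), by rw [← h23]; exact hm y (by simp)⟩

/-- Main acyclicity criterion for hub-containing sets. -/
lemma acyclic_hub (hk : 3 ≤ k) (hE : IsOrientation (wheelGraph k) E)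
    (B : Set (ZMod k)) (μ i₀ : ZMod k) (hi₀ : i₀ ∉ B)
    (hpair : ∀ i, i ∈ B → i + 1 ∈ B → i = μ) (hT : ¬ Cyc E μ) :
    AcyclicOn E {x | x = none ∨ ∃ i ∈ B, x = some i} := by
  intro v l hd hall
  have hBmem : ∀ i : ZMod k, some i ∈ v :: l → i ∈ B := by
    intro i hi
    rcases hall _ hi with h | ⟨i', hi', h⟩
    · exact absurd h (by simp)
    · rw [(Option.some_injective _ (h.symm) : i' = i)] at hi'
      exact hi'
  by_cases hn : none ∈ v :: l
  · rcases hub_dicycle hk hE hd hn with ⟨b, c, hbc, hb, hb1, hc, hc1⟩ | ⟨b, hcyc, hb, hb1⟩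
    · have e1 := hpair b (hBmem _ hb) (hBmem _ hb1)
      have e2 := hpair c (hBmem _ hc) (hBmem _ hc1)
      exact hbc (e1.trans e2.symm)
    · have e1 := hpair b (hBmem _ hb) (hBmem _ hb1)
      rw [e1] at hcyc
      exact hT hcyc
  · have hcov := (rim_dicycle hk hE hd (fun x hx hxn => hn (hxn ▸ hx))).1
    exact hi₀ (hBmem i₀ (hcov i₀))

lemma acyclic_rim_minus (hk : 3 ≤ k) (hE : IsOrientation (wheelGraph k) E) (i₀ : ZMod k) :
    AcyclicOn E {x | ∃ i : ZMod k, i ≠ i₀ ∧ x = some i} := by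
  intro v l hd hall
  by_cases hn : none ∈ v :: l
  · obtain ⟨i, -, h⟩ := hall none hn
    exact absurd h (by simp)
  · have hcov := (rim_dicycle hk hE hd (fun x hx hxn => hn (hxn ▸ hx))).1
    obtain ⟨i, hne, h⟩ := hall (some i₀) (hcov i₀)
    exact hne (Option.some_injective _ h.symm)

lemma acyclic_rim (hk : 3 ≤ k) (hE : IsOrientation (wheelGraph k) E)
    (hf : ¬ ∀ i, E (some i) (some (i+1))) (hb : ¬ ∀ i, E (some (i+1)) (some i)) :
    AcyclicOn E {x | x ≠ none} := by
  intro v l hd hall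
  by_cases hn : none ∈ v :: l
  · exact (hall none hn) rfl
  · rcases (rim_dicycle hk hE hd (fun x hx hxn => hn (hxn ▸ hx))).2 with h | h
    · exact hf h
    · exact hb h

end Hub

section Parity

variable {k : ℕ} [NeZero k]
variable {E : Option (ZMod k) → Option (ZMod k) → Prop}

lemma parity_contra (hodd : Odd k) (sp : ZMod k → Prop)
    (halt : ∀ i, sp i ↔ ¬ sp (i+1)) : False := by
  have key : ∀ t : ℕ, sp ((0 : ZMod k) + (t : ℕ)) ↔ (Even t ↔ sp 0) := by
    intro t
    induction t with
    | zero => simp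
    | succ t ih =>
      have h1 := halt ((0 : ZMod k) + (t : ℕ))
      have hc : (0 : ZMod k) + ((t+1 : ℕ) : ZMod k) = ((0 : ZMod k) + (t : ℕ)) + 1 := by
        push_cast; ring
      rw [hc]
      have he : Even (t + 1) ↔ ¬ Even t := Nat.even_add_one
      tauto
  have hk0 : ((k : ℕ) : ZMod k) = 0 := ZMod.natCast_self k
  have := key k
  rw [hk0, add_zero] at this
  have hnek : ¬ Even k := Nat.not_even_iff_odd.mpr hodd
  tauto

lemma exists_noncyc (hk : 3 ≤ k) (hodd : Odd k) (hE : IsOrientation (wheelGraph k) E) :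
    ∃ j, ¬ Cyc E j := by
  by_contra h
  push_neg at h
  apply parity_contra hodd (fun i => E none (some i))
  intro i
  rcases h i with ⟨h1, h2, h3⟩ | ⟨h1, h2, h3⟩
  · constructor
    · intro _ hc
      exact orient_noTwo hE hc h3
    · intro hc
      exact h1
  · constructor
    · intro hc
      exact (orient_noTwo hE hc h3).elim
    · intro hns
      exact absurd h1 hns
end Parity

section CaseLemmas

variable {k : ℕ} [NeZero k]
variable {E : Option (ZMod k) → Option (ZMod k) → Prop}

lemma spoke_of_not (hE : IsOrientation (wheelGraph k) E) {i : ZMod k}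
    (h : ¬ E none (some i)) : E (some i) none := (spokeTot hE i).resolve_left h

lemma not_spoke (hE : IsOrientation (wheelGraph k) E) {i : ZMod k}
    (h : E (some i) none) : ¬ E none (some i) := fun hc => orient_noTwo hE hc h

lemma rim_not_fwd (hodd : Odd k) (hE : IsOrientation (wheelGraph k) E)
    (hcov : ∀ μ : ZMod k, Cyc E (μ - 1) ∨ Cyc E μ) :
    ¬ ∀ i, E (some i) (some (i+1)) := by
  intro hall
  have hcyc : ∀ i, Cyc E i ↔ (E none (some i) ∧ ¬ E none (some (i+1))) := by
    intro i
    constructor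
    · rintro (⟨h1, h2, h3⟩ | ⟨h1, h2, h3⟩)
      · exact ⟨h1, not_spoke hE h3⟩
      · exact (orient_noTwo hE (hall i) h2).elim
    · rintro ⟨h1, h2⟩
      exact Or.inl ⟨h1, hall i, spoke_of_not hE h2⟩
  apply parity_contra hodd (fun i => E none (some i))
  intro i
  by_cases h1 : E none (some i) <;> by_cases h2 : E none (some (i + 1))
  · exfalso
    have hci : ¬ Cyc E i := fun hc => ((hcyc i).mp hc).2 h2
    have hcov0 := hcov i
    have hc0 : Cyc E (i - 1) := hcov0.resolve_right hci
    have hx := ((hcyc (i-1)).mp hc0).2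
    have e2 : i - 1 + 1 = i := by ring
    rw [e2] at hx
    exact hx h1
  · tauto
  · tauto
  · exfalso
    have hci : ¬ Cyc E i := fun hc => h1 ((hcyc i).mp hc).1
    have hcov1 := hcov (i+1)
    have e : i + 1 - 1 = i := by ring
    rw [e] at hcov1
    have hc1 := hcov1.resolve_left hci
    exact h2 ((hcyc (i+1)).mp hc1).1

lemma rim_not_bwd (hodd : Odd k) (hE : IsOrientation (wheelGraph k) E)
    (hcov : ∀ μ : ZMod k, Cyc E (μ - 1) ∨ Cyc E μ) :
    ¬ ∀ i, E (some (i+1)) (some i) := by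
  intro hall
  have hcyc : ∀ i, Cyc E i ↔ (¬ E none (some i) ∧ E none (some (i+1))) := by
    intro i
    constructor
    · rintro (⟨h1, h2, h3⟩ | ⟨h1, h2, h3⟩)
      · exact (orient_noTwo hE (hall i) h2).elim
      · exact ⟨not_spoke hE h3, h1⟩
    · rintro ⟨h1, h2⟩
      exact Or.inr ⟨h2, hall i, spoke_of_not hE h1⟩
  apply parity_contra hodd (fun i => E none (some i))
  intro i
  by_cases h1 : E none (some i) <;> by_cases h2 : E none (some (i + 1))
  · exfalso
    have hci : ¬ Cyc E i := fun hc => ((hcyc i).mp hc).1 h1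
    have hcov1 := hcov (i+1)
    have e : i + 1 - 1 = i := by ring
    rw [e] at hcov1
    have hc1 := hcov1.resolve_left hci
    exact (((hcyc (i+1)).mp hc1).1) h2
  · tauto
  · tauto
  · exfalso
    have hci : ¬ Cyc E i := fun hc => h2 ((hcyc i).mp hc).2
    have hcov0 := hcov i
    have hc0 : Cyc E (i - 1) := hcov0.resolve_right hci
    have hx := ((hcyc (i-1)).mp hc0).2
    have e2 : i - 1 + 1 = i := by ring
    rw [e2] at hx
    exact h1 hx

end CaseLemmas

section ValLemmas

variable {k : ℕ} [NeZero k]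

lemma val_succ_sub (i μ : ZMod k) : ((i + 1) - μ).val = ((i - μ).val + 1) % k := by
  have h1 : (i + 1) - μ = (((i - μ).val + 1 : ℕ) : ZMod k) := by
    push_cast
    rw [ZMod.natCast_rightInverse (i - μ)]
    ring
  rw [h1, ZMod.val_natCast]

lemma pair_odd (hodd : Odd k) (μ : ZMod k) :
    ∀ i : ZMod k, (i = μ ∨ (i - μ).val % 2 = 1) →
      ((i+1) = μ ∨ ((i+1) - μ).val % 2 = 1) → i = μ := by
  intro i h1 h2
  rcases h1 with h1 | h1
  · exact h1
  · exfalso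
    have hv := val_succ_sub i μ
    set v := (i - μ).val with hvdef
    have hvk : v < k := ZMod.val_lt _
    have hko : k % 2 = 1 := Nat.odd_iff.mp hodd
    rcases h2 with h2 | h2
    · have hz : ((i+1) - μ).val = 0 := by rw [h2]; simp
      rw [hv] at hz
      rcases Nat.lt_or_ge (v + 1) k with hlt | hge
      · rw [Nat.mod_eq_of_lt hlt] at hz; omega
      · have hvk1 : v + 1 = k := by omega
        omega
    · rw [hv] at h2
      rcases Nat.lt_or_ge (v + 1) k with hlt | hge
      · rw [Nat.mod_eq_of_lt hlt] at h2; omega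
      · have hvk1 : v + 1 = k := by omega
        rw [hvk1, Nat.mod_self] at h2; omega

lemma neg_one_val (hk : 3 ≤ k) : ((k - 1 : ℕ) : ZMod k) = -1 := by
  have h : ((k - 1 : ℕ) : ZMod k) + 1 = ((k : ℕ) : ZMod k) := by
    have e : (k - 1) + 1 = k := by omega
    rw [← e]; push_cast; ring
  rw [ZMod.natCast_self] at h
  linear_combination h

lemma pair_even (hk : 3 ≤ k) (hodd : Odd k) (μ : ZMod k) :
    ∀ i : ZMod k, (i - μ).val % 2 = 0 → ((i+1) - μ).val % 2 = 0 → i = μ - 1 := by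
  intro i h1 h2
  have hv := val_succ_sub i μ
  set v := (i - μ).val with hvdef
  have hvk : v < k := ZMod.val_lt _
  have hko : k % 2 = 1 := Nat.odd_iff.mp hodd
  rw [hv] at h2
  rcases Nat.lt_or_ge (v + 1) k with hlt | hge
  · rw [Nat.mod_eq_of_lt hlt] at h2; omega
  · have hvk1 : v = k - 1 := by omega
    have h3 : ((k - 1 : ℕ) : ZMod k) = i - μ := by
      rw [← hvk1, hvdef]
      exact ZMod.natCast_rightInverse (i - μ)
    rw [neg_one_val hk] at h3
    linear_combination -h3

lemma pair_even_ne (hodd : Odd k) (μ : ZMod k) :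
    ∀ i : ZMod k, ((i - μ).val % 2 = 0 ∧ i ≠ μ) →
      (((i+1) - μ).val % 2 = 0 ∧ (i+1) ≠ μ) → False := by
  rintro i ⟨h1, hne⟩ ⟨h2, hne2⟩
  have hv := val_succ_sub i μ
  set v := (i - μ).val with hvdef
  have hvk : v < k := ZMod.val_lt _
  have hko : k % 2 = 1 := Nat.odd_iff.mp hodd
  have hv0 : v ≠ 0 := by
    intro h0
    apply hne
    have : i - μ = 0 := (ZMod.val_eq_zero _).mp h0
    linear_combination this
  rw [hv] at h2
  rcases Nat.lt_or_ge (v + 1) k with hlt | hge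
  · rw [Nat.mod_eq_of_lt hlt] at h2; omega
  · have hvk1 : v + 1 = k := by omega
    apply hne2
    have hz : ((i+1) - μ).val = 0 := by rw [hv, hvk1, Nat.mod_self]
    have : (i+1) - μ = 0 := (ZMod.val_eq_zero _).mp hz
    linear_combination this

end ValLemmas

section Partition

variable {k : ℕ} [NeZero k]
variable {E : Option (ZMod k) → Option (ZMod k) → Prop}

lemma glue (f : Option (ZMod k) → Fin 3)
    (h01 : AcyclicOn E {x | f x = 0 ∨ f x = 1})
    (h12 : AcyclicOn E {x | f x = 1 ∨ f x = 2})
    (h02 : AcyclicOn E {x | f x = 0 ∨ f x = 2}) :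
    ∀ i j : Fin 3, i ≠ j → AcyclicOn E {x | f x = i ∨ f x = j} := by
  have hsym : ∀ (i j : Fin 3), {x : Option (ZMod k) | f x = i ∨ f x = j} =
      {x | f x = j ∨ f x = i} := fun i j => Set.ext fun x => or_comm
  intro i j hij
  fin_cases i <;> fin_cases j <;>
    first
      | exact absurd rfl hij
      | exact h01
      | exact h12
      | exact h02
      | (rw [hsym]; first | exact h01 | exact h12 | exact h02)

lemma lemP (hk : 3 ≤ k) (hodd : Odd k) (hE : IsOrientation (wheelGraph k) E) :
    ∃ f : Option (ZMod k) → Fin 3,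
      ∀ i j : Fin 3, i ≠ j → AcyclicOn E {x | f x = i ∨ f x = j} := by
  classical
  by_cases hA : ∃ μ, ¬ Cyc E μ ∧ ¬ Cyc E (μ - 1)
  · obtain ⟨μ, hTμ, hTμ'⟩ := hA
    set g : ZMod k → Fin 3 :=
      fun i => if i = μ then 2 else if (i - μ).val % 2 = 1 then 1 else 0 with hg
    have h2val : ((μ + 2) - μ).val = 2 := by
      have e : (μ + 2) - μ = ((2 : ℕ) : ZMod k) := by push_cast; ring
      rw [e, ZMod.val_natCast, Nat.mod_eq_of_lt (by omega)]
    have h1val : ((μ + 1) - μ).val = 1 := by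
      have e : (μ + 1) - μ = ((1 : ℕ) : ZMod k) := by push_cast; ring
      rw [e, ZMod.val_natCast, Nat.mod_eq_of_lt (by omega)]
    refine ⟨fun x => Option.casesOn x 2 g, glue _ ?_ ?_ ?_⟩
    · refine (acyclic_rim_minus hk hE μ).mono ?_
      rintro x hx
      cases x with
      | none =>
        have hx' : (2:Fin 3) = 0 ∨ (2:Fin 3) = 1 := hx
        rcases hx' with h | h <;> exact absurd h (by decide)
      | some i =>
        have hx' : g i = 0 ∨ g i = 1 := hx
        refine ⟨i, ?_, rfl⟩
        intro hiμ
        have hgi : g i = 2 := by rw [hg]; simp [hiμ]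
        rw [hgi] at hx'
        rcases hx' with h | h <;> exact absurd h (by decide)
    · refine (acyclic_hub hk hE {i | i = μ ∨ (i - μ).val % 2 = 1} μ (μ + 2) ?_
        (pair_odd hodd μ) hTμ).mono ?_
      · rintro (h | h)
        · have h0 : ((μ + 2) - μ).val = 0 := by rw [h]; simp
          omega
        · omega
      · rintro x hx
        cases x with
        | none => exact Or.inl rfl
        | some i =>
          have hx' : g i = 1 ∨ g i = 2 := hx
          refine Or.inr ⟨i, ?_, rfl⟩
          rw [hg] at hx'
          by_cases hiμ : i = μ
          · exact Or.inl hiμ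
          · right
            simp only [if_neg hiμ] at hx'
            by_cases hodd1 : (i - μ).val % 2 = 1
            · exact hodd1
            · simp only [if_neg hodd1] at hx'
              rcases hx' with h | h <;> exact absurd h (by decide)
    · refine (acyclic_hub hk hE {i | (i - μ).val % 2 = 0} (μ - 1) (μ + 1) ?_ ?_ ?_).mono ?_
      · intro h
        simp only [Set.mem_setOf_eq] at h
        omega
      · intro i hi hi1
        exact pair_even hk hodd μ i hi hi1
      · exact hTμ'
      · rintro x hx
        cases x with
        | none => exact Or.inl rfl
        | some i =>
          have hx' : g i = 0 ∨ g i = 2 := hx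
          refine Or.inr ⟨i, ?_, rfl⟩
          rw [hg] at hx'
          simp only [Set.mem_setOf_eq]
          by_cases hiμ : i = μ
          · rw [hiμ]; simp
          · simp only [if_neg hiμ] at hx'
            by_cases hodd1 : (i - μ).val % 2 = 1
            · simp only [if_pos hodd1] at hx'
              rcases hx' with h | h <;> exact absurd h (by decide)
            · omega
  · have hcov : ∀ μ : ZMod k, Cyc E (μ - 1) ∨ Cyc E μ := by
      intro μ
      by_contra hc
      push_neg at hc
      exact hA ⟨μ, hc.2, hc.1⟩
    obtain ⟨j, hj⟩ := exists_noncyc hk hodd hE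
    have hfwd := rim_not_fwd hodd hE hcov
    have hbwd := rim_not_bwd hodd hE hcov
    set g : ZMod k → Fin 3 :=
      fun i => if i = j then 1 else if (i - j).val % 2 = 1 then 1 else 0 with hg
    have h2val : ((j + 2) - j).val = 2 := by
      have e : (j + 2) - j = ((2 : ℕ) : ZMod k) := by push_cast; ring
      rw [e, ZMod.val_natCast, Nat.mod_eq_of_lt (by omega)]
    have hgne2 : ∀ i, g i ≠ 2 := by
      intro i
      rw [hg]
      by_cases hij : i = j
      · simp [hij]
      · simp only [if_neg hij]
        by_cases ho : (i - j).val % 2 = 1 <;> simp [ho]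
    refine ⟨fun x => Option.casesOn x 2 g, glue _ ?_ ?_ ?_⟩
    · refine (acyclic_rim hk hE hfwd hbwd).mono ?_
      rintro x hx
      cases x with
      | none =>
        have hx' : (2:Fin 3) = 0 ∨ (2:Fin 3) = 1 := hx
        rcases hx' with h | h <;> exact absurd h (by decide)
      | some i => simp
    · refine (acyclic_hub hk hE {i | i = j ∨ (i - j).val % 2 = 1} j (j + 2) ?_
        (pair_odd hodd j) hj).mono ?_
      · rintro (h | h)
        · have h0 : ((j + 2) - j).val = 0 := by rw [h]; simp
          omega
        · omega
      · rintro x hx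
        cases x with
        | none => exact Or.inl rfl
        | some i =>
          have hx' : g i = 1 ∨ g i = 2 := hx
          refine Or.inr ⟨i, ?_, rfl⟩
          rcases hx' with h | h
          · rw [hg] at h
            by_cases hij : i = j
            · exact Or.inl hij
            · right
              simp only [if_neg hij] at h
              by_cases ho : (i - j).val % 2 = 1
              · exact ho
              · simp only [if_neg ho] at h
                exact absurd h (by decide)
          · exact absurd h (hgne2 i)
    · refine (acyclic_hub hk hE {i | (i - j).val % 2 = 0 ∧ i ≠ j} j j ?_ ?_ hj).mono ?_
      · rintro ⟨-, h⟩
        exact h rfl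
      · intro i hi hi1
        exact (pair_even_ne hodd j i hi hi1).elim
      · rintro x hx
        cases x with
        | none => exact Or.inl rfl
        | some i =>
          have hx' : g i = 0 ∨ g i = 2 := hx
          refine Or.inr ⟨i, ?_, rfl⟩
          rcases hx' with h | h
          · rw [hg] at h
            by_cases hij : i = j
            · simp only [if_pos hij] at h
              exact absurd h (by decide)
            · simp only [if_neg hij] at h
              by_cases ho : (i - j).val % 2 = 1
              · simp only [if_pos ho] at h
                exact absurd h (by decide)
              · exact ⟨by omega, hij⟩
          · exact absurd h (hgne2 i)

end Partition

section UpperBounds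

lemma coe_add_zsmul (p x : ℝ) (z : ℤ) : ((x + z • p : ℝ) : AddCircle p) = (x : ℝ) := by
  have h : ((z • p : ℝ) : AddCircle p) = 0 := (AddCircle.coe_eq_zero_iff p).mpr ⟨z, rfl⟩
  have h2 : ((x + z • p : ℝ) : AddCircle p) = ((x:ℝ):AddCircle p) + ((z • p : ℝ) : AddCircle p) :=
    rfl
  rw [h2, h, add_zero]

lemma coe_eq_coe_sub (p u w : ℝ) (h : ((u:ℝ) : AddCircle p) = ((w:ℝ):AddCircle p)) :
    ∃ z : ℤ, z • p = u - w := by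
  have h3 : ((u - w : ℝ) : AddCircle p) = 0 := by
    have h2 : ((u - w : ℝ) : AddCircle p) = ((u:ℝ):AddCircle p) - ((w:ℝ):AddCircle p) := rfl
    rw [h2, h, sub_self]
  exact (AddCircle.coe_eq_zero_iff p).mp h3

lemma arc_avoid (a : ℝ) :
    ¬ (((0:ℝ) : AddCircle (3/2 : ℝ)) ∈ unitArc (3/2) a ∧
       ((1/2 : ℝ) : AddCircle (3/2 : ℝ)) ∈ unitArc (3/2) a ∧
       ((1:ℝ) : AddCircle (3/2 : ℝ)) ∈ unitArc (3/2) a) := by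
  rintro ⟨⟨u, hu, hu0⟩, ⟨v, hv, hv0⟩, ⟨w, hw, hw0⟩⟩
  simp only [Set.mem_Ioo] at hu hv hw
  obtain ⟨m, hm⟩ := coe_eq_coe_sub (3/2) u 0 hu0
  obtain ⟨n, hn⟩ := coe_eq_coe_sub (3/2) v (1/2) hv0
  obtain ⟨l, hl⟩ := coe_eq_coe_sub (3/2) w 1 hw0
  rw [zsmul_eq_mul] at hm hn hl
  have hnm : n - m = 0 := by
    have h1 : ((n - m : ℤ) : ℝ) < 1 := by push_cast; linarith
    have h2 : (-1 : ℝ) < ((n - m : ℤ) : ℝ) := by push_cast; linarith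
    have h1' : (n - m : ℤ) < 1 := by exact_mod_cast h1
    have h2' : (-1 : ℤ) < n - m := by exact_mod_cast h2
    omega
  have hln : l - n = 0 := by
    have h1 : ((l - n : ℤ) : ℝ) < 1 := by push_cast; linarith
    have h2 : (-1 : ℝ) < ((l - n : ℤ) : ℝ) := by push_cast; linarith
    have h1' : (l - n : ℤ) < 1 := by exact_mod_cast h1
    have h2' : (-1 : ℤ) < l - n := by exact_mod_cast h2
    omega
  have hnm' : ((n : ℝ)) - m = 0 := by
    have : (((n - m : ℤ) : ℝ)) = ((0 : ℤ) : ℝ) := by rw [hnm]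
    push_cast at this
    linarith
  have hln' : ((l : ℝ)) - n = 0 := by
    have : (((l - n : ℤ) : ℝ)) = ((0 : ℤ) : ℝ) := by rw [hln]
    push_cast at this
    linarith
  have : w - u = 1 := by
    have e1 : v - u = 1/2 := by linarith [hm, hn]
    have e2 : w - v = 1/2 := by linarith [hn, hl]
    linarith
  linarith

lemma fin3 (v : Fin 3) : v = 0 ∨ v = 1 ∨ v = 2 := by fin_cases v <;> decide

variable {k : ℕ} [NeZero k]
variable {E : Option (ZMod k) → Option (ZMod k) → Prop}

lemma star_mem (hk : 3 ≤ k) (hodd : Odd k) (hE : IsOrientation (wheelGraph k) E) :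
    (3/2 : ℝ) ∈ {p : ℝ | 1 ≤ p ∧
      ∃ c : Option (ZMod k) → AddCircle p, IsAcyclicColouring E p c} := by
  obtain ⟨f, hf⟩ := lemP hk hodd hE
  refine ⟨by norm_num, fun x => ((((f x : ℕ) : ℝ) / 2 : ℝ) : AddCircle (3/2 : ℝ)), ?_⟩
  intro a
  set c : Option (ZMod k) → AddCircle (3/2 : ℝ) :=
    fun x => ((((f x : ℕ) : ℝ) / 2 : ℝ) : AddCircle (3/2 : ℝ)) with hcdef
  have hc0 : ∀ x, f x = 0 → c x = ((0:ℝ) : AddCircle (3/2:ℝ)) := by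
    intro x h; rw [hcdef]; simp only [h]; norm_num
  have hc1 : ∀ x, f x = 1 → c x = ((1/2:ℝ) : AddCircle (3/2:ℝ)) := by
    intro x h; rw [hcdef]; simp only [h]; norm_num
  have hc2 : ∀ x, f x = 2 → c x = ((1:ℝ) : AddCircle (3/2:ℝ)) := by
    intro x h; rw [hcdef]; simp only [h]; norm_num
  have key := arc_avoid a
  by_cases h0 : ((0:ℝ) : AddCircle (3/2:ℝ)) ∈ unitArc (3/2) a
  · by_cases h1 : ((1/2:ℝ) : AddCircle (3/2:ℝ)) ∈ unitArc (3/2) a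
    · have h2 : ((1:ℝ) : AddCircle (3/2:ℝ)) ∉ unitArc (3/2) a := fun h2 => key ⟨h0, h1, h2⟩
      refine (hf 0 1 (by decide)).mono ?_
      intro x hx
      rcases fin3 (f x) with h | h | h
      · exact Or.inl h
      · exact Or.inr h
      · exact absurd (by rw [← hc2 x h]; exact hx) h2
    · refine (hf 0 2 (by decide)).mono ?_
      intro x hx
      rcases fin3 (f x) with h | h | h
      · exact Or.inl h
      · exact absurd (by rw [← hc1 x h]; exact hx) h1
      · exact Or.inr h
  · refine (hf 1 2 (by decide)).mono ?_
    intro x hx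
    rcases fin3 (f x) with h | h | h
    · exact absurd (by rw [← hc0 x h]; exact hx) h0
    · exact Or.inl h
    · exact Or.inr h

lemma frac_mem (hk : 3 ≤ k) (hodd : Odd k) (hE : IsOrientation (wheelGraph k) E) :
    (3/2 : ℝ) ∈ {r : ℝ | ∃ x : Finset (Option (ZMod k)) → ℝ, (∀ A, 0 ≤ x A) ∧
      (∀ A : Finset (Option (ZMod k)), x A ≠ 0 → AcyclicOn E ↑A) ∧
      (∀ v : Option (ZMod k),
        1 ≤ ∑ A ∈ Finset.univ.filter (fun A : Finset (Option (ZMod k)) => v ∈ A), x A) ∧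
      r = ∑ A : Finset (Option (ZMod k)), x A} := by
  classical
  obtain ⟨f, hf⟩ := lemP hk hodd hE
  set F : Fin 3 → Fin 3 → Finset (Option (ZMod k)) :=
    fun i j => Finset.univ.filter (fun x => f x = i ∨ f x = j) with hF
  have hcoe : ∀ (i j : Fin 3), ((F i j : Finset (Option (ZMod k))) : Set (Option (ZMod k))) =
      {x | f x = i ∨ f x = j} := by
    intro i j; ext x; simp [hF]
  refine ⟨fun A => (if A = F 0 1 then (1/2:ℝ) else 0) + (if A = F 1 2 then (1/2:ℝ) else 0) +
    (if A = F 0 2 then (1/2:ℝ) else 0), ?_, ?_, ?_, ?_⟩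
  · intro A; dsimp only; split_ifs <;> norm_num
  · intro A hA
    have hor : A = F 0 1 ∨ A = F 1 2 ∨ A = F 0 2 := by
      by_contra hc
      push_neg at hc
      simp [hc.1, hc.2.1, hc.2.2] at hA
    rcases hor with h | h | h
    · rw [h, hcoe]; exact hf 0 1 (by decide)
    · rw [h, hcoe]; exact hf 1 2 (by decide)
    · rw [h, hcoe]; exact hf 0 2 (by decide)
  · intro v
    dsimp only
    rw [Finset.sum_add_distrib, Finset.sum_add_distrib,
      Finset.sum_ite_eq' _ (F 0 1) (fun _ => (1/2:ℝ)),
      Finset.sum_ite_eq' _ (F 1 2) (fun _ => (1/2:ℝ)),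
      Finset.sum_ite_eq' _ (F 0 2) (fun _ => (1/2:ℝ))]
    have hmem : ∀ (i j : Fin 3),
        F i j ∈ Finset.univ.filter (fun A : Finset (Option (ZMod k)) => v ∈ A) ↔
          (f v = i ∨ f v = j) := by
      intro i j
      simp [hF]
    rcases fin3 (f v) with h | h | h
    · have hno : F 1 2 ∉ Finset.univ.filter (fun A : Finset (Option (ZMod k)) => v ∈ A) := by
        intro hc
        rcases (hmem 1 2).mp hc with h' | h' <;> rw [h] at h' <;> exact absurd h' (by decide)
      rw [if_pos ((hmem 0 1).mpr (Or.inl h)), if_pos ((hmem 0 2).mpr (Or.inl h)), if_neg hno]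
      norm_num
    · have hno : F 0 2 ∉ Finset.univ.filter (fun A : Finset (Option (ZMod k)) => v ∈ A) := by
        intro hc
        rcases (hmem 0 2).mp hc with h' | h' <;> rw [h] at h' <;> exact absurd h' (by decide)
      rw [if_pos ((hmem 0 1).mpr (Or.inr h)), if_pos ((hmem 1 2).mpr (Or.inl h)), if_neg hno]
      norm_num
    · have hno : F 0 1 ∉ Finset.univ.filter (fun A : Finset (Option (ZMod k)) => v ∈ A) := by
        intro hc
        rcases (hmem 0 1).mp hc with h' | h' <;> rw [h] at h' <;> exact absurd h' (by decide)
      rw [if_pos ((hmem 1 2).mpr (Or.inr h)), if_pos ((hmem 0 2).mpr (Or.inr h)), if_neg hno]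
      norm_num
  · dsimp only
    rw [Finset.sum_add_distrib, Finset.sum_add_distrib,
      Finset.sum_ite_eq' _ (F 0 1) (fun _ => (1/2:ℝ)),
      Finset.sum_ite_eq' _ (F 1 2) (fun _ => (1/2:ℝ)),
      Finset.sum_ite_eq' _ (F 0 2) (fun _ => (1/2:ℝ))]
    simp only [Finset.mem_univ, if_pos]
    norm_num

end UpperBounds

section LowerBounds

/-- The extremal orientation: directed rim, hub dominated except by `r₀`. -/
def Ezero (k : ℕ) : Option (ZMod k) → Option (ZMod k) → Prop := fun a b =>
  match a, b with
  | none, some i => i = 0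
  | some i, none => i ≠ 0
  | some i, some j => j = i + 1
  | none, none => False

variable {k : ℕ} [NeZero k]

lemma wheelOne_ne_zero (hk : 3 ≤ k) : ((1:ℕ) : ZMod k) ≠ 0 := by
  rw [Ne, ZMod.natCast_eq_zero_iff]
  intro h
  have := Nat.le_of_dvd one_pos h
  omega

lemma wheelTwo_ne_zero (hk : 3 ≤ k) : ((2:ℕ) : ZMod k) ≠ 0 := by
  rw [Ne, ZMod.natCast_eq_zero_iff]
  intro h
  have := Nat.le_of_dvd (by norm_num) h
  omega

lemma Ezero_orient (hk : 3 ≤ k) : IsOrientation (wheelGraph k) (Ezero k) := by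
  intro u w
  constructor
  · constructor
    · intro h
      rw [wheelGraph, SimpleGraph.fromRel_adj]
      cases u with
      | none =>
        cases w with
        | none => exact absurd h (by rintro (h | h) <;> exact h)
        | some i => exact ⟨by simp, Or.inl trivial⟩
      | some i =>
        cases w with
        | none => exact ⟨by simp, Or.inr trivial⟩
        | some j =>
          have h' : j = i + 1 ∨ i = j + 1 := h
          refine ⟨?_, h'⟩
          intro he
          have hij : i = j := Option.some.inj he
          apply wheelOne_ne_zero hk
          rcases h' with h'' | h''
          · rw [hij] at h''
            push_cast
            linear_combination -h''
          · rw [hij] at h''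
            push_cast
            linear_combination -h''
    · intro h
      rw [wheelGraph, SimpleGraph.fromRel_adj] at h
      obtain ⟨hne, hr⟩ := h
      cases u with
      | none =>
        cases w with
        | none => exact absurd rfl hne
        | some i =>
          by_cases h0 : i = 0
          · exact Or.inl h0
          · exact Or.inr h0
      | some i =>
        cases w with
        | none =>
          by_cases h0 : i = 0
          · exact Or.inr h0
          · exact Or.inl h0
        | some j => exact hr
  · cases u with
    | none =>
      cases w with
      | none => rintro ⟨h, -⟩; exact h
      | some i => rintro ⟨h1, h2⟩; exact (h2 : i ≠ 0) (h1 : i = 0)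
    | some i =>
      cases w with
      | none => rintro ⟨h1, h2⟩; exact (h1 : i ≠ 0) (h2 : i = 0)
      | some j =>
        rintro ⟨h1, h2⟩
        have h1' : j = i + 1 := h1
        have h2' : i = j + 1 := h2
        apply wheelTwo_ne_zero hk
        rw [h1'] at h2'
        push_cast
        linear_combination -h2'

lemma tri_dicycle (hk : 3 ≤ k) : IsDicycle (Ezero k) none [some 0, some 1] := by
  constructor
  · have h01 : (0 : ZMod k) ≠ 1 := by
      intro h
      apply wheelOne_ne_zero hk
      push_cast
      linear_combination -h
    simp [h01]
  · have e1 : Ezero k none (some 0) := rfl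
    have e2 : Ezero k (some 0) (some (1 : ZMod k)) := by
      show (1 : ZMod k) = 0 + 1
      rw [zero_add]
    have e3 : Ezero k (some (1 : ZMod k)) none := by
      show (1 : ZMod k) ≠ 0
      intro h
      apply wheelOne_ne_zero hk
      push_cast
      linear_combination h
    exact List.chain_cons.mpr ⟨e1, List.chain_cons.mpr ⟨e2,
      List.chain_cons.mpr ⟨e3, List.Chain.nil⟩⟩⟩

lemma frac_lb (hk : 3 ≤ k) :
    ∀ r ∈ {r : ℝ | ∃ x : Finset (Option (ZMod k)) → ℝ, (∀ A, 0 ≤ x A) ∧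
      (∀ A : Finset (Option (ZMod k)), x A ≠ 0 → AcyclicOn (Ezero k) ↑A) ∧
      (∀ v : Option (ZMod k),
        1 ≤ ∑ A ∈ Finset.univ.filter (fun A : Finset (Option (ZMod k)) => v ∈ A), x A) ∧
      r = ∑ A : Finset (Option (ZMod k)), x A}, (3/2 : ℝ) ≤ r := by
  classical
  rintro r ⟨x, hx0, hacy, hcov, rfl⟩
  have hkey : ∀ A : Finset (Option (ZMod k)),
      x A * ((if none ∈ A then (1:ℝ) else 0) + (if some (0:ZMod k) ∈ A then (1:ℝ) else 0) +
        (if some (1:ZMod k) ∈ A then (1:ℝ) else 0)) ≤ x A * 2 := by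
    intro A
    rcases eq_or_ne (x A) 0 with h | h
    · simp [h]
    · have hac := hacy A h
      have hnall : ¬ (none ∈ A ∧ some (0:ZMod k) ∈ A ∧ some (1:ZMod k) ∈ A) := by
        rintro ⟨ha, hb, hc⟩
        apply hac none [some 0, some 1] (tri_dicycle hk)
        intro y hy
        simp only [List.mem_cons, List.not_mem_nil, or_false] at hy
        rcases hy with rfl | rfl | rfl <;> assumption
      apply mul_le_mul_of_nonneg_left _ (hx0 A)
      split_ifs <;> first | (exact absurd ⟨by assumption, by assumption, by assumption⟩ hnall) | norm_num
  have hsum : ∑ A : Finset (Option (ZMod k)),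
      x A * ((if none ∈ A then (1:ℝ) else 0) + (if some (0:ZMod k) ∈ A then (1:ℝ) else 0) +
        (if some (1:ZMod k) ∈ A then (1:ℝ) else 0)) =
      (∑ A ∈ Finset.univ.filter (fun A : Finset (Option (ZMod k)) => none ∈ A), x A) +
      (∑ A ∈ Finset.univ.filter (fun A : Finset (Option (ZMod k)) => some (0:ZMod k) ∈ A), x A) +
      (∑ A ∈ Finset.univ.filter (fun A : Finset (Option (ZMod k)) => some (1:ZMod k) ∈ A), x A)
      := by
    simp only [mul_add, mul_ite, mul_one, mul_zero]
    rw [Finset.sum_add_distrib, Finset.sum_add_distrib,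
      Finset.sum_filter, Finset.sum_filter, Finset.sum_filter]
  have h3 : (3:ℝ) ≤ ∑ A : Finset (Option (ZMod k)),
      x A * ((if none ∈ A then (1:ℝ) else 0) + (if some (0:ZMod k) ∈ A then (1:ℝ) else 0) +
        (if some (1:ZMod k) ∈ A then (1:ℝ) else 0)) := by
    rw [hsum]
    have c1 := hcov none
    have c2 := hcov (some (0:ZMod k))
    have c3 := hcov (some (1:ZMod k))
    linarith
  have h2 : ∑ A : Finset (Option (ZMod k)),
      x A * ((if none ∈ A then (1:ℝ) else 0) + (if some (0:ZMod k) ∈ A then (1:ℝ) else 0) +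
        (if some (1:ZMod k) ∈ A then (1:ℝ) else 0)) ≤ 2 * ∑ A : Finset (Option (ZMod k)), x A := by
    calc _ ≤ ∑ A : Finset (Option (ZMod k)), x A * 2 := Finset.sum_le_sum (fun A _ => hkey A)
    _ = 2 * ∑ A : Finset (Option (ZMod k)), x A := by rw [← Finset.sum_mul]; ring
  linarith

lemma star_lb (hk : 3 ≤ k) :
    ∀ p ∈ {p : ℝ | 1 ≤ p ∧ ∃ c : Option (ZMod k) → AddCircle p,
      IsAcyclicColouring (Ezero k) p c}, (3/2:ℝ) ≤ p := by
  rintro p ⟨hp1, c, hc⟩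
  have hp0 : (0:ℝ) < p := by linarith
  have lift : ∀ t : AddCircle p, ∃ τ : ℝ, 0 ≤ τ ∧ τ < p ∧ ((τ:ℝ) : AddCircle p) = t := by
    intro t
    induction t using QuotientAddGroup.induction_on with
    | H r =>
      refine ⟨r - p * ⌊r / p⌋, ?_, ?_, ?_⟩
      · have h1 : (⌊r / p⌋ : ℝ) ≤ r / p := Int.floor_le _
        have h2 : p * (⌊r / p⌋ : ℝ) ≤ p * (r / p) := by nlinarith
        have h3 : p * (r / p) = r := by field_simp
        linarith
      · have h1 : r / p < ⌊r / p⌋ + 1 := Int.lt_floor_add_one _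
        have h2 : p * (r / p) < p * ((⌊r / p⌋ : ℝ) + 1) := by nlinarith
        have h3 : p * (r / p) = r := by field_simp
        nlinarith
      · have : r - p * ⌊r / p⌋ + (⌊r / p⌋ : ℤ) • p = r := by
          rw [zsmul_eq_mul]
          ring
        calc ((r - p * ⌊r / p⌋ : ℝ) : AddCircle p)
            = ((r - p * ⌊r / p⌋ + (⌊r / p⌋ : ℤ) • p : ℝ) : AddCircle p) :=
              (coe_add_zsmul p _ _).symm
        _ = ((r : ℝ) : AddCircle p) := by rw [this]
  obtain ⟨τ₀, h00, h01, h0e⟩ := lift (c none)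
  obtain ⟨τ₁, h10, h11, h1e⟩ := lift (c (some 0))
  obtain ⟨τ₂, h20, h21, h2e⟩ := lift (c (some 1))
  have Hspan : ∀ ρ₁ ρ₂ ρ₃ : ℝ, ρ₁ ≤ ρ₂ → ρ₂ ≤ ρ₃ →
      (∀ x ∈ [(none : Option (ZMod k)), some 0, some 1],
        c x = ((ρ₁:ℝ) : AddCircle p) ∨ c x = ((ρ₂:ℝ) : AddCircle p) ∨
          c x = ((ρ₃:ℝ) : AddCircle p)) →
      1 ≤ ρ₃ - ρ₁ := by
    intro ρ₁ ρ₂ ρ₃ h12 h23 hcov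
    by_contra hlt
    push_neg at hlt
    set a := (ρ₁ + ρ₃ - 1)/2 with ha
    apply hc a none [some 0, some 1] (tri_dicycle hk)
    intro y hy
    have hmem : ∀ ρ : ℝ, ρ₁ ≤ ρ → ρ ≤ ρ₃ → ((ρ:ℝ) : AddCircle p) ∈ unitArc p a :=
      fun ρ hl hr => ⟨ρ, ⟨by rw [ha]; linarith, by rw [ha]; linarith⟩, rfl⟩
    show c y ∈ unitArc p a
    rcases hcov y hy with h | h | h
    · rw [h]; exact hmem ρ₁ le_rfl (by linarith)
    · rw [h]; exact hmem ρ₂ h12 h23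
    · rw [h]; exact hmem ρ₃ (by linarith) le_rfl
  have hcovall : ∀ x ∈ [(none : Option (ZMod k)), some 0, some 1],
      c x = ((τ₀:ℝ) : AddCircle p) ∨ c x = ((τ₁:ℝ) : AddCircle p) ∨
        c x = ((τ₂:ℝ) : AddCircle p) := by
    intro x hx
    simp only [List.mem_cons, List.not_mem_nil, or_false] at hx
    rcases hx with rfl | rfl | rfl
    · exact Or.inl h0e.symm
    · exact Or.inr (Or.inl h1e.symm)
    · exact Or.inr (Or.inr h2e.symm)
  have main : ∀ ρ₁ ρ₂ ρ₃ : ℝ, 0 ≤ ρ₁ → ρ₁ ≤ ρ₂ → ρ₂ ≤ ρ₃ → ρ₃ < p →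
      (∀ x ∈ [(none : Option (ZMod k)), some 0, some 1],
        c x = ((ρ₁:ℝ) : AddCircle p) ∨ c x = ((ρ₂:ℝ) : AddCircle p) ∨
          c x = ((ρ₃:ℝ) : AddCircle p)) →
      (3:ℝ) ≤ 2*p := by
    intro ρ₁ ρ₂ ρ₃ h0 h12 h23 h3p hcov
    have e1 : 1 ≤ ρ₃ - ρ₁ := Hspan ρ₁ ρ₂ ρ₃ h12 h23 hcov
    have hco1 : ((ρ₁ + p : ℝ) : AddCircle p) = ((ρ₁ : ℝ) : AddCircle p) := by
      have := coe_add_zsmul p ρ₁ 1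
      simpa using this
    have hco2 : ((ρ₂ + p : ℝ) : AddCircle p) = ((ρ₂ : ℝ) : AddCircle p) := by
      have := coe_add_zsmul p ρ₂ 1
      simpa using this
    have e2 : 1 ≤ (ρ₁ + p) - ρ₂ := by
      apply Hspan ρ₂ ρ₃ (ρ₁ + p) h23 (by linarith)
      intro x hx
      rcases hcov x hx with h | h | h
      · exact Or.inr (Or.inr (by rw [h, hco1]))
      · exact Or.inl h
      · exact Or.inr (Or.inl h)
    have e3 : 1 ≤ (ρ₂ + p) - ρ₃ := by
      apply Hspan ρ₃ (ρ₁ + p) (ρ₂ + p) (by linarith) (by linarith)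
      intro x hx
      rcases hcov x hx with h | h | h
      · exact Or.inr (Or.inl (by rw [h, hco1]))
      · exact Or.inr (Or.inr (by rw [h, hco2]))
      · exact Or.inl h
    linarith
  have hperm : ∀ ρ₁ ρ₂ ρ₃ : ℝ,
      ({((ρ₁:ℝ) : AddCircle p), ((ρ₂:ℝ) : AddCircle p), ((ρ₃:ℝ) : AddCircle p)} :
        Set (AddCircle p)) = {((τ₀:ℝ) : AddCircle p), ((τ₁:ℝ) : AddCircle p),
          ((τ₂:ℝ) : AddCircle p)} →
      (∀ x ∈ [(none : Option (ZMod k)), some 0, some 1],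
        c x = ((ρ₁:ℝ) : AddCircle p) ∨ c x = ((ρ₂:ℝ) : AddCircle p) ∨
          c x = ((ρ₃:ℝ) : AddCircle p)) := by
    intro ρ₁ ρ₂ ρ₃ hset x hx
    have h := hcovall x hx
    have : c x ∈ ({((τ₀:ℝ) : AddCircle p), ((τ₁:ℝ) : AddCircle p),
        ((τ₂:ℝ) : AddCircle p)} : Set (AddCircle p)) := by
      rcases h with h | h | h
      · exact Or.inl h
      · exact Or.inr (Or.inl h)
      · exact Or.inr (Or.inr h)
    rw [← hset] at this
    exact this
  have hfin : (3:ℝ) ≤ 2*p := by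
    rcases le_total τ₀ τ₁ with ha | ha <;> rcases le_total τ₁ τ₂ with hb | hb <;>
      rcases le_total τ₀ τ₂ with hd | hd
    · exact main τ₀ τ₁ τ₂ h00 ha hb h21 (hperm _ _ _ (by
        ext z; simp only [Set.mem_insert_iff, Set.mem_singleton_iff]; try tauto))
    · exact main τ₀ τ₁ τ₂ h00 ha hb h21 (hperm _ _ _ (by
        ext z; simp only [Set.mem_insert_iff, Set.mem_singleton_iff]; try tauto))
    · exact main τ₀ τ₂ τ₁ h00 hd hb h11 (hperm _ _ _ (by
        ext z; simp only [Set.mem_insert_iff, Set.mem_singleton_iff]; try tauto))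
    · exact main τ₂ τ₀ τ₁ h20 hd ha h11 (hperm _ _ _ (by
        ext z; simp only [Set.mem_insert_iff, Set.mem_singleton_iff]; try tauto))
    · exact main τ₁ τ₀ τ₂ h10 ha hd h21 (hperm _ _ _ (by
        ext z; simp only [Set.mem_insert_iff, Set.mem_singleton_iff]; try tauto))
    · exact main τ₁ τ₂ τ₀ h10 hb hd h01 (hperm _ _ _ (by
        ext z; simp only [Set.mem_insert_iff, Set.mem_singleton_iff]; try tauto))
    · exact main τ₂ τ₁ τ₀ h20 hb ha h01 (hperm _ _ _ (by
        ext z; simp only [Set.mem_insert_iff, Set.mem_singleton_iff]; try tauto))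
    · exact main τ₂ τ₁ τ₀ h20 hb ha h01 (hperm _ _ _ (by
        ext z; simp only [Set.mem_insert_iff, Set.mem_singleton_iff]; try tauto))
  linarith

end LowerBounds

/-- for odd `k ≥ 3`, the wheel satisfies
`χ⃗*(W_k) = χ⃗_f(W_k) = 3/2`. -/
theorem stmt18 (k : ℕ) [NeZero k] (hk : 3 ≤ k) (hodd : Odd k) :
    starDichromaticGraph (wheelGraph k) = 3 / 2 ∧
    fracDichromaticGraph (wheelGraph k) = 3 / 2 := by
  have hE0 := Ezero_orient (k := k) hk
  have star_le : ∀ E : Option (ZMod k) → Option (ZMod k) → Prop,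
      IsOrientation (wheelGraph k) E → starDichromatic E ≤ 3/2 := by
    intro E hE
    exact csInf_le ⟨1, fun p hp => hp.1⟩ (star_mem hk hodd hE)
  have star_e0 : starDichromatic (Ezero k) = 3/2 :=
    le_antisymm (star_le _ hE0)
      (le_csInf ⟨3/2, star_mem hk hodd hE0⟩ (star_lb hk))
  have frac_le : ∀ E : Option (ZMod k) → Option (ZMod k) → Prop,
      IsOrientation (wheelGraph k) E → fracDichromatic E ≤ 3/2 := by
    intro E hE
    apply csInf_le ?_ (frac_mem hk hodd hE)
    refine ⟨0, ?_⟩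
    rintro r ⟨x, hx0, -, -, rfl⟩
    exact Finset.sum_nonneg (fun A _ => hx0 A)
  have frac_e0 : fracDichromatic (Ezero k) = 3/2 :=
    le_antisymm (frac_le _ hE0)
      (le_csInf ⟨3/2, frac_mem hk hodd hE0⟩ (frac_lb hk))
  constructor
  · have hmem : (3/2 : ℝ) ∈ {r : ℝ | ∃ E, IsOrientation (wheelGraph k) E ∧
        r = starDichromatic E} := ⟨Ezero k, hE0, star_e0.symm⟩
    have hbdd : BddAbove {r : ℝ | ∃ E, IsOrientation (wheelGraph k) E ∧
        r = starDichromatic E} := by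
      refine ⟨3/2, ?_⟩
      rintro r ⟨E, hE, rfl⟩
      exact star_le E hE
    exact le_antisymm
      (csSup_le ⟨3/2, hmem⟩ (by rintro r ⟨E, hE, rfl⟩; exact star_le E hE))
      (le_csSup hbdd hmem)
  · have hmem : (3/2 : ℝ) ∈ {r : ℝ | ∃ E, IsOrientation (wheelGraph k) E ∧
        r = fracDichromatic E} := ⟨Ezero k, hE0, frac_e0.symm⟩
    have hbdd : BddAbove {r : ℝ | ∃ E, IsOrientation (wheelGraph k) E ∧
        r = fracDichromatic E} := by
      refine ⟨3/2, ?_⟩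
      rintro r ⟨E, hE, rfl⟩
      exact frac_le E hE
    exact le_antisymm
      (csSup_le ⟨3/2, hmem⟩ (by rintro r ⟨E, hE, rfl⟩; exact frac_le E hE))
      (le_csSup hbdd hmem)
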